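/- Weighted strange point inequality: Let N ≥ 3, let π₁,…,π_N be nonnegative reals summing to 1, and let W assign to each 3-subset of [N] at most one winner. Fix α ∈ (0,1) and call unit k strange if Σ_{i≠j, i,j ≠ k} π_i π_j · I{k wins {i,j,k}} ≥ (1−α)·((1−π_k)² − Σ_{l≠k} π_l²). Let S be the set of strange units and β = Σ_{k∈S} π_k. Then (1/3)β³ − β² + β·[Σ_{i∈S} π_i² + α(1 − Σ_{l=1}^N π_l²)] ≥ (4/3 − 2α)·Σ_{i∈S} π_i³ − (1−2α)·Σ_{i∈S} π_i². -/
import Mathlib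


open Finset

/- ===================== Auxiliary definitions and lemmas ===================== -/

variable {N : ℕ}

/-- indicator of `i ≠ j`, as a real number. -/
private def eNE (i j : Fin N) : ℝ := if i = j then 0 else 1

private lemma eNE_symm (i j : Fin N) : eNE i j = eNE j i := by
  unfold eNE
  by_cases h : i = j
  · simp [h]
  · rw [if_neg h, if_neg (Ne.symm h)]

private lemma sum_mul_eNE (g : Fin N → ℝ) (i : Fin N) :
    ∑ j, g j * eNE i j = (∑ j, g j) - g i := by
  have h : ∀ j : Fin N, g j * eNE i j = g j - (if i = j then g j else 0) := by
    intro j; unfold eNE; split_ifs <;> ring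
  rw [Finset.sum_congr rfl fun j _ => h j, Finset.sum_sub_distrib, Finset.sum_ite_eq]
  simp

private lemma sum_mul_eNE2 (g : Fin N → ℝ) {i j : Fin N} (hij : i ≠ j) :
    ∑ k, g k * (eNE i k * eNE j k) = (∑ k, g k) - g i - g j := by
  have h : ∀ k : Fin N, g k * (eNE i k * eNE j k)
      = g k - (if i = k then g k else 0) - (if j = k then g k else 0) := by
    intro k; unfold eNE
    by_cases h1 : i = k <;> by_cases h2 : j = k
    · exact absurd (h1.trans h2.symm) hij
    · simp [h1, h2]
    · simp [h1, h2]
    · simp [h1, h2]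
  rw [Finset.sum_congr rfl fun k _ => h k, Finset.sum_sub_distrib, Finset.sum_sub_distrib,
    Finset.sum_ite_eq, Finset.sum_ite_eq]
  simp

/-- sum of `g i g j g k` over ordered distinct triples, closed form. -/
private lemma Tval (g : Fin N → ℝ) :
    ∑ i, ∑ j, ∑ k, g i * g j * g k * (eNE i j * eNE i k * eNE j k)
      = (∑ i, g i) ^ 3 - 3 * (∑ i, g i) * (∑ i, g i ^ 2) + 2 * ∑ i, g i ^ 3 := by
  have inner : ∀ i j : Fin N,
      ∑ k, g i * g j * g k * (eNE i j * eNE i k * eNE j k)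
        = g i * g j * eNE i j * ((∑ l, g l) - g i - g j) := by
    intro i j
    by_cases hij : i = j
    · subst hij
      simp [eNE]
    · have h := sum_mul_eNE2 g hij
      calc ∑ k, g i * g j * g k * (eNE i j * eNE i k * eNE j k)
          = g i * g j * eNE i j * ∑ k, g k * (eNE i k * eNE j k) := by
            rw [Finset.mul_sum]; exact Finset.sum_congr rfl fun k _ => by ring
        _ = _ := by rw [h]
  rw [Finset.sum_congr rfl fun i _ => Finset.sum_congr rfl fun j _ => inner i j]
  have row : ∀ i : Fin N,
      ∑ j, g i * g j * eNE i j * ((∑ l, g l) - g i - g j)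
        = (∑ l, g l) ^ 2 * g i - 2 * (∑ l, g l) * g i ^ 2 + 2 * g i ^ 3
            - (∑ l, g l ^ 2) * g i := by
    intro i
    have h1 : ∑ j, g j * eNE i j = (∑ l, g l) - g i := sum_mul_eNE g i
    have h2 : ∑ j, g j ^ 2 * eNE i j = (∑ l, g l ^ 2) - g i ^ 2 :=
      sum_mul_eNE (fun j => g j ^ 2) i
    calc ∑ j, g i * g j * eNE i j * ((∑ l, g l) - g i - g j)
        = ∑ j, (((∑ l, g l) - g i) * g i * (g j * eNE i j) - g i * (g j ^ 2 * eNE i j)) :=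
          Finset.sum_congr rfl fun j _ => by ring
      _ = ((∑ l, g l) - g i) * g i * (∑ j, g j * eNE i j)
            - g i * ∑ j, g j ^ 2 * eNE i j := by
          rw [Finset.sum_sub_distrib, ← Finset.mul_sum, ← Finset.mul_sum]
      _ = ((∑ l, g l) - g i) * g i * ((∑ l, g l) - g i)
            - g i * ((∑ l, g l ^ 2) - g i ^ 2) := by rw [h1, h2]
      _ = _ := by ring
  rw [Finset.sum_congr rfl fun i _ => row i]
  simp only [Finset.sum_add_distrib, Finset.sum_sub_distrib, ← Finset.mul_sum]
  ring

private def chiF (W : Finset (Fin N) → Option (Fin N)) (i j k : Fin N) : ℝ :=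
  if W {i, j, k} = some k then 1 else 0

private def indF (S : Finset (Fin N)) (k : Fin N) : ℝ := if k ∈ S then 1 else 0

private def orF (S : Finset (Fin N)) (i j k : Fin N) : ℝ :=
  if i ∈ S ∨ j ∈ S ∨ k ∈ S then 1 else 0

private lemma chiF_nonneg (W : Finset (Fin N) → Option (Fin N)) (i j k : Fin N) :
    0 ≤ chiF W i j k := by
  unfold chiF; split <;> norm_num

private lemma indF_nonneg (S : Finset (Fin N)) (k : Fin N) : 0 ≤ indF S k := by
  unfold indF; split <;> norm_num

private lemma orF_nonneg (S : Finset (Fin N)) (i j k : Fin N) : 0 ≤ orF S i j k := by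
  unfold orF; split <;> norm_num

private lemma indF_le_or_left (S : Finset (Fin N)) (i j k : Fin N) :
    indF S i ≤ orF S i j k := by
  unfold indF orF
  by_cases hi : i ∈ S <;> simp [hi] <;> split_ifs <;> norm_num

private lemma indF_le_or_mid (S : Finset (Fin N)) (i j k : Fin N) :
    indF S j ≤ orF S i j k := by
  unfold indF orF
  by_cases hj : j ∈ S <;> simp [hj] <;> split_ifs <;> norm_num

private lemma indF_le_or_right (S : Finset (Fin N)) (i j k : Fin N) :
    indF S k ≤ orF S i j k := by
  unfold indF orF
  by_cases hk : k ∈ S <;> simp [hk] <;> split_ifs <;> norm_num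

private lemma triple_rot (a b c : Fin N) : ({a, b, c} : Finset (Fin N)) = {b, c, a} := by
  ext x; simp only [Finset.mem_insert, Finset.mem_singleton]; tauto

/-- at most one member of a genuine 3-set is the winner. -/
private lemma chi_sum (W : Finset (Fin N) → Option (Fin N)) {i j k : Fin N}
    (hij : i ≠ j) (hik : i ≠ k) (hjk : j ≠ k) :
    chiF W i j k + chiF W k i j + chiF W j k i ≤ 1 := by
  have e1 : ({k, i, j} : Finset (Fin N)) = {i, j, k} := triple_rot k i j
  have e2 : ({j, k, i} : Finset (Fin N)) = {i, j, k} := (triple_rot i j k).symm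
  unfold chiF
  rw [e1, e2]
  rcases h : W ({i, j, k} : Finset (Fin N)) with _ | w
  · simp
  · simp only [h, Option.some.injEq]
    by_cases h1 : w = k <;> by_cases h2 : w = j <;> by_cases h3 : w = i <;>
      simp_all <;> norm_num

private lemma rot3 (H : Fin N → Fin N → Fin N → ℝ) :
    ∑ i, ∑ j, ∑ k, H i j k = ∑ i, ∑ j, ∑ k, H k i j :=
  calc ∑ i, ∑ j, ∑ k, H i j k
      = ∑ j, ∑ i, ∑ k, H i j k := Finset.sum_comm
    _ = ∑ j, ∑ k, ∑ i, H i j k := Finset.sum_congr rfl fun _ _ => Finset.sum_comm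

private lemma rot3' (H : Fin N → Fin N → Fin N → ℝ) :
    ∑ i, ∑ j, ∑ k, H i j k = ∑ i, ∑ j, ∑ k, H j k i :=
  (rot3 H).trans (rot3 fun i j k => H k i j)

private def Hf (π : Fin N → ℝ) (W : Finset (Fin N) → Option (Fin N))
    (S : Finset (Fin N)) (i j k : Fin N) : ℝ :=
  π i * π j * π k * (eNE i j * eNE i k * eNE j k) * chiF W i j k * indF S k

private def Lsum (π : Fin N → ℝ) (W : Finset (Fin N) → Option (Fin N)) (k : Fin N) : ℝ :=
  ∑ p ∈ Finset.univ.filter (fun p : Fin N × Fin N => p.1 ≠ p.2 ∧ p.1 ≠ k ∧ p.2 ≠ k),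
    π p.1 * π p.2 * (if W {p.1, p.2, k} = some k then (1 : ℝ) else 0)

private lemma Lsum_eq (π : Fin N → ℝ) (W : Finset (Fin N) → Option (Fin N)) (k : Fin N) :
    Lsum π W k
      = ∑ i, ∑ j, (eNE i j * eNE i k * eNE j k) * (π i * π j * chiF W i j k) := by
  unfold Lsum
  rw [Finset.sum_filter, Fintype.sum_prod_type]
  refine Finset.sum_congr rfl fun i _ => Finset.sum_congr rfl fun j _ => ?_
  unfold eNE chiF
  by_cases h1 : i = j <;> by_cases h2 : i = k <;> by_cases h3 : j = k <;>
    simp [h1, h2, h3]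

private lemma Y_eq (π : Fin N → ℝ) (W : Finset (Fin N) → Option (Fin N))
    (S : Finset (Fin N)) :
    ∑ i, ∑ j, ∑ k, Hf π W S i j k = ∑ k ∈ S, π k * Lsum π W k := by
  calc ∑ i, ∑ j, ∑ k, Hf π W S i j k
      = ∑ i, ∑ j, ∑ k, Hf π W S j k i := rot3' _
    _ = ∑ i, indF S i * (π i * Lsum π W i) := by
        refine Finset.sum_congr rfl fun i _ => ?_
        rw [Lsum_eq π W i]
        simp only [Finset.mul_sum]
        refine Finset.sum_congr rfl fun j _ => Finset.sum_congr rfl fun k _ => ?_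
        unfold Hf
        ring
    _ = ∑ i, (if i ∈ S then π i * Lsum π W i else 0) := by
        refine Finset.sum_congr rfl fun i _ => ?_
        unfold indF; split_ifs <;> ring
    _ = ∑ k ∈ S, π k * Lsum π W k := by
        rw [Finset.sum_ite_mem, Finset.univ_inter]

private lemma key_core (P a b c x y z w : ℝ) (hP : 0 ≤ P) (ha : 0 ≤ a) (hb : 0 ≤ b)
    (hc : 0 ≤ c) (hsum : a + b + c ≤ 1) (hx : x ≤ w) (hy : y ≤ w) (hz : z ≤ w)
    (hw : 0 ≤ w) :
    P * a * x + P * b * y + P * c * z ≤ P * w := by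
  have h1 : P * a * x ≤ P * a * w := mul_le_mul_of_nonneg_left hx (mul_nonneg hP ha)
  have h2 : P * b * y ≤ P * b * w := mul_le_mul_of_nonneg_left hy (mul_nonneg hP hb)
  have h3 : P * c * z ≤ P * c * w := mul_le_mul_of_nonneg_left hz (mul_nonneg hP hc)
  have h4 : P * w * (a + b + c) ≤ P * w * 1 :=
    mul_le_mul_of_nonneg_left hsum (mul_nonneg hP hw)
  nlinarith [h1, h2, h3, h4]

private lemma key_ineq (π : Fin N → ℝ) (hπ0 : ∀ i, 0 ≤ π i)
    (W : Finset (Fin N) → Option (Fin N)) (S : Finset (Fin N)) (i j k : Fin N) :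
    Hf π W S i j k + Hf π W S k i j + Hf π W S j k i
      ≤ π i * π j * π k * (eNE i j * eNE i k * eNE j k) * orF S i j k := by
  by_cases hij : i = j
  · subst hij; simp [Hf, eNE]
  by_cases hik : i = k
  · subst hik; simp [Hf, eNE]
  by_cases hjk : j = k
  · subst hjk; simp [Hf, eNE]
  have E1 : eNE i j = 1 := if_neg hij
  have E2 : eNE i k = 1 := if_neg hik
  have E3 : eNE j k = 1 := if_neg hjk
  have E4 : eNE j i = 1 := if_neg (Ne.symm hij)
  have E5 : eNE k i = 1 := if_neg (Ne.symm hik)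
  have E6 : eNE k j = 1 := if_neg (Ne.symm hjk)
  have hP : 0 ≤ π i * π j * π k := mul_nonneg (mul_nonneg (hπ0 i) (hπ0 j)) (hπ0 k)
  have main := key_core (π i * π j * π k) (chiF W i j k) (chiF W k i j) (chiF W j k i)
    (indF S k) (indF S j) (indF S i) (orF S i j k) hP
    (chiF_nonneg W i j k) (chiF_nonneg W k i j) (chiF_nonneg W j k i)
    (chi_sum W hij hik hjk)
    (indF_le_or_right S i j k) (indF_le_or_mid S i j k) (indF_le_or_left S i j k)
    (orF_nonneg S i j k)
  unfold Hf
  rw [E1, E2, E3, E4, E5, E6]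
  nlinarith [main]

/- ===================== Main theorem ===================== -/

/-- Weighted strange point inequality: with nonnegative weights `π` summing to 1,
a winner function `W` on 3-subsets of `[N]`, and strange units `k` those with
`∑_{i≠j, i,j≠k} π_i π_j 1{k wins {i,j,k}} ≥ (1-α)((1-π_k)² - ∑_{l≠k} π_l²)`,
the total strange weight `β = ∑_{k∈S} π_k` satisfies
`(1/3)β³ - β² + β(∑_{i∈S} π_i² + α(1 - ∑_l π_l²))
  ≥ (4/3 - 2α) ∑_{i∈S} π_i³ - (1-2α) ∑_{i∈S} π_i²`. -/
theorem weighted_lto_strange_bound (N : ℕ) (hN : 3 ≤ N)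
    (π : Fin N → ℝ) (hπ0 : ∀ i, 0 ≤ π i) (hπ1 : ∑ i, π i = 1)
    (W : Finset (Fin N) → Option (Fin N))
    (hW : ∀ t : Finset (Fin N), ∀ i : Fin N, W t = some i → i ∈ t)
    (α : ℝ) (hα0 : 0 < α) (hα1 : α < 1)
    (S : Finset (Fin N))
    (hS : S = Finset.univ.filter (fun k : Fin N =>
      (1 - α) * ((1 - π k) ^ 2 - ∑ l ∈ Finset.univ.filter (fun l => l ≠ k), π l ^ 2) ≤
        ∑ p ∈ Finset.univ.filter (fun p : Fin N × Fin N =>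
          p.1 ≠ p.2 ∧ p.1 ≠ k ∧ p.2 ≠ k),
          π p.1 * π p.2 * (if W {p.1, p.2, k} = some k then (1 : ℝ) else 0)))
    (β : ℝ) (hβ : β = ∑ k ∈ S, π k) :
    (4 / 3 - 2 * α) * ∑ i ∈ S, π i ^ 3 - (1 - 2 * α) * ∑ i ∈ S, π i ^ 2 ≤
      (1 / 3) * β ^ 3 - β ^ 2 +
        β * (∑ i ∈ S, π i ^ 2 + α * (1 - ∑ l, π l ^ 2)) := by
  classical
  set q : ℝ := ∑ l, π l ^ 2 with hq
  set γ : ℝ := ∑ i ∈ S, π i ^ 2 with hγ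
  set δ : ℝ := ∑ i ∈ S, π i ^ 3 with hδ
  set r : ℝ := ∑ l, π l ^ 3 with hr
  -- strangeness of each member of S
  have h_strange : ∀ k ∈ S, (1 - α) * ((1 - π k) ^ 2 - (q - π k ^ 2)) ≤ Lsum π W k := by
    intro k hk
    rw [hS] at hk
    have h := (Finset.mem_filter.mp hk).2
    have he : ∑ l ∈ Finset.univ.filter (fun l => l ≠ k), π l ^ 2 = q - π k ^ 2 := by
      rw [Finset.filter_ne', Finset.sum_erase_eq_sub (Finset.mem_univ k)]
    rw [he] at h
    exact h
  -- closed form of the weighted pair-mass sum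
  have hA : ∑ k ∈ S, π k * ((1 - π k) ^ 2 - (q - π k ^ 2))
      = β - 2 * γ + 2 * δ - β * q := by
    have h1 : ∀ k ∈ S, π k * ((1 - π k) ^ 2 - (q - π k ^ 2))
        = π k - 2 * π k ^ 2 + 2 * π k ^ 3 - q * π k := fun k _ => by ring
    rw [Finset.sum_congr rfl h1]
    simp only [Finset.sum_sub_distrib, Finset.sum_add_distrib, ← Finset.mul_sum]
    rw [← hβ, ← hγ, ← hδ]
    ring
  -- weighted strangeness summed over S
  have h2 : (1 - α) * (β - 2 * γ + 2 * δ - β * q) ≤ ∑ k ∈ S, π k * Lsum π W k := by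
    rw [← hA, Finset.mul_sum]
    refine Finset.sum_le_sum fun k hk => ?_
    have h := h_strange k hk
    calc (1 - α) * (π k * ((1 - π k) ^ 2 - (q - π k ^ 2)))
        = π k * ((1 - α) * ((1 - π k) ^ 2 - (q - π k ^ 2))) := by ring
      _ ≤ π k * Lsum π W k := mul_le_mul_of_nonneg_left h (hπ0 k)
  have hY := Y_eq π W S
  rw [← hY] at h2
  -- rotation bound: 3 Y ≤ V
  have hrot1 : (∑ i, ∑ j, ∑ k, Hf π W S i j k) = ∑ i, ∑ j, ∑ k, Hf π W S k i j :=
    rot3 _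
  have hrot2 : (∑ i, ∑ j, ∑ k, Hf π W S i j k) = ∑ i, ∑ j, ∑ k, Hf π W S j k i :=
    rot3' _
  have h5 : 3 * (∑ i, ∑ j, ∑ k, Hf π W S i j k)
      ≤ ∑ i, ∑ j, ∑ k, π i * π j * π k * (eNE i j * eNE i k * eNE j k) * orF S i j k := by
    have hsum3 : ∑ i, ∑ j, ∑ k,
        (Hf π W S i j k + Hf π W S k i j + Hf π W S j k i)
          = 3 * (∑ i, ∑ j, ∑ k, Hf π W S i j k) := by
      simp only [Finset.sum_add_distrib]
      rw [← hrot1, ← hrot2]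
      ring
    rw [← hsum3]
    exact Finset.sum_le_sum fun i _ => Finset.sum_le_sum fun j _ =>
      Finset.sum_le_sum fun k _ => key_ineq π hπ0 W S i j k
  -- closed form of V
  have h6 : ∑ i, ∑ j, ∑ k, π i * π j * π k * (eNE i j * eNE i k * eNE j k) * orF S i j k
      = (∑ i, ∑ j, ∑ k, π i * π j * π k * (eNE i j * eNE i k * eNE j k))
        - ∑ i, ∑ j, ∑ k, (π i * (1 - indF S i)) * (π j * (1 - indF S j))
            * (π k * (1 - indF S k)) * (eNE i j * eNE i k * eNE j k) := by
    simp only [← Finset.sum_sub_distrib]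
    refine Finset.sum_congr rfl fun i _ => Finset.sum_congr rfl fun j _ =>
      Finset.sum_congr rfl fun k _ => ?_
    have hor : orF S i j k = 1 - (1 - indF S i) * (1 - indF S j) * (1 - indF S k) := by
      unfold orF indF
      by_cases hi : i ∈ S <;> by_cases hj : j ∈ S <;> by_cases hk : k ∈ S <;>
        simp [hi, hj, hk]
    rw [hor]
    ring
  -- moments of π restricted off S
  have hm1 : ∑ l, π l * (1 - indF S l) = 1 - β := by
    have h1 : ∀ l : Fin N, π l * (1 - indF S l) = π l - (if l ∈ S then π l else 0) := by
      intro l; unfold indF; split_ifs <;> ring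
    rw [Finset.sum_congr rfl fun l _ => h1 l, Finset.sum_sub_distrib, hπ1,
      Finset.sum_ite_mem, Finset.univ_inter, ← hβ]
  have hm2 : ∑ l, (π l * (1 - indF S l)) ^ 2 = q - γ := by
    have h1 : ∀ l : Fin N, (π l * (1 - indF S l)) ^ 2
        = π l ^ 2 - (if l ∈ S then π l ^ 2 else 0) := by
      intro l; unfold indF; split_ifs <;> ring
    rw [Finset.sum_congr rfl fun l _ => h1 l, Finset.sum_sub_distrib,
      Finset.sum_ite_mem, Finset.univ_inter, ← hq, ← hγ]
  have hm3 : ∑ l, (π l * (1 - indF S l)) ^ 3 = r - δ := by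
    have h1 : ∀ l : Fin N, (π l * (1 - indF S l)) ^ 3
        = π l ^ 3 - (if l ∈ S then π l ^ 3 else 0) := by
      intro l; unfold indF; split_ifs <;> ring
    rw [Finset.sum_congr rfl fun l _ => h1 l, Finset.sum_sub_distrib,
      Finset.sum_ite_mem, Finset.univ_inter, ← hr, ← hδ]
  -- closed forms of the two distinct-triple sums
  have hTA : (∑ i, ∑ j, ∑ k, π i * π j * π k * (eNE i j * eNE i k * eNE j k))
      = 1 - 3 * q + 2 * r := by
    rw [Tval π, hπ1, ← hq, ← hr]
    ring
  have hTB : (∑ i, ∑ j, ∑ k, (π i * (1 - indF S i)) * (π j * (1 - indF S j))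
        * (π k * (1 - indF S k)) * (eNE i j * eNE i k * eNE j k))
      = (1 - β) ^ 3 - 3 * (1 - β) * (q - γ) + 2 * (r - δ) := by
    rw [Tval (fun l => π l * (1 - indF S l)), hm1, hm2, hm3]
  rw [h6, hTA, hTB] at h5
  -- combine everything
  nlinarith [h2, h5]
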